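/- Let k be a field, G a finite group, Γ a normal subgroup of G, and V a Yetter–Drinfeld module over kG with support X. Let Γ act on X by conjugation, and let T ⊆ X be a set containing exactly one element of each Γ-orbit. For x ∈ X write C_Γ(x) for the centralizer of x in Γ and H_0(C_Γ(x), V_x) = V_x / span_k{(γ − 1)·v : γ ∈ C_Γ(x), v ∈ V_x}. Then there is a k-linear isomorphism V / span_k{(γ − 1)·v : γ ∈ Γ, v ∈ V} ≅ ⊕_{x ∈ T} H_0(C_Γ(x), V_x). Moreover, if the kernel of the induced algebra map k[G] → k[G/Γ] is a nilpotent ideal, then H_0(C_Γ(x), V_x) ≠ 0 for every x ∈ X. -/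

import Mathlib

open scoped DirectSum

set_option linter.unusedSectionVars false
set_option maxHeartbeats 1000000
set_option synthInstance.maxHeartbeats 400000

namespace S10

variable {k : Type*} [Field k] {G : Type*} [Group G] [DecidableEq G]
  {V : Type*} [AddCommGroup V] [Module k V]
  (Γ : Subgroup G) (ρ : Representation k G V) (grading : G → Submodule k V)

/-- the span of `(γ-1)v` for `γ` centralizing `x` in `Γ` and `v ∈ V_x`. -/
def Sx (x : G) : Submodule k V :=
  Submodule.span k {w : V | ∃ γ ∈ Subgroup.centralizer {x} ⊓ Γ,
    ∃ v ∈ grading x, w = ρ γ v - v}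

def W : Submodule k V :=
  Submodule.span k {w : V | ∃ γ ∈ Γ, ∃ v : V, w = ρ γ v - v}

abbrev Q (x : G) : Type _ :=
  grading x ⧸ Submodule.comap (grading x).subtype (Sx Γ ρ grading x)

abbrev QT (T : Set G) : T → Type _ := fun x => Q Γ ρ grading (x : G)

instance QT.instAddCommGroup (T : Set G) (x : T) : AddCommGroup (QT Γ ρ grading T x) :=
  Submodule.Quotient.addCommGroup _

theorem mem_conj (hcompat : ∀ g h : G, (grading h).map (ρ g) = grading (g * h * g⁻¹))
    {g : G} {v : V} (hv : v ∈ grading g) (γ : G) :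
    ρ γ v ∈ grading (γ * g * γ⁻¹) := by
  rw [← hcompat γ g]
  exact Submodule.mem_map_of_mem hv

theorem mem_of_conj (hcompat : ∀ g h : G, (grading h).map (ρ g) = grading (g * h * g⁻¹))
    {g x : G} {v : V} (hv : v ∈ grading g) {γ : G}
    (hγ : γ * g * γ⁻¹ = x) : ρ γ v ∈ grading x :=
  hγ ▸ mem_conj ρ grading hcompat hv γ

variable {T : Set G}

open Classical in
/-- The component map `V_g → ⊕_{x ∈ T} H₀(C_Γ(x), V_x)`. -/
noncomputable def phiAt
    (hcompat : ∀ g h : G, (grading h).map (ρ g) = grading (g * h * g⁻¹))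
    (hT : ∀ x ∈ {g : G | grading g ≠ ⊥}, ∃! y : G, y ∈ T ∧ ∃ γ ∈ Γ, γ * x * γ⁻¹ = y)
    (g : G) : grading g →ₗ[k] ⨁ x : T, QT Γ ρ grading T x :=
  if hg : grading g = ⊥ then 0
  else
    (DirectSum.lof k T (QT Γ ρ grading T) ⟨(hT g hg).choose, (hT g hg).choose_spec.1.1⟩).comp
      ((Submodule.mkQ _).comp
        (LinearMap.codRestrict (grading (hT g hg).choose)
          ((ρ (hT g hg).choose_spec.1.2.choose).comp (grading g).subtype)
          (fun v => mem_of_conj ρ grading hcompat v.2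
            (hT g hg).choose_spec.1.2.choose_spec.2)))

theorem sub_mem_Sx (hcompat : ∀ g h : G, (grading h).map (ρ g) = grading (g * h * g⁻¹))
    {g x γ δ : G} (hγΓ : γ ∈ Γ) (hδΓ : δ ∈ Γ)
    (hγ : γ * g * γ⁻¹ = x) (hδ : δ * g * δ⁻¹ = x)
    {v : V} (hv : v ∈ grading g) :
    ρ γ v - ρ δ v ∈ Sx Γ ρ grading x := by
  apply Submodule.subset_span
  refine ⟨γ * δ⁻¹, Subgroup.mem_inf.mpr ⟨?_, mul_mem hγΓ (inv_mem hδΓ)⟩, ρ δ v,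
    mem_of_conj ρ grading hcompat hv hδ, ?_⟩
  · rw [Subgroup.mem_centralizer_iff]
    intro y hy
    rw [show y = x from hy]
    have hg2 : δ⁻¹ * x * δ = g := by rw [← hδ]; group
    have key : (γ * δ⁻¹) * x * (γ * δ⁻¹)⁻¹ = x := by
      calc (γ * δ⁻¹) * x * (γ * δ⁻¹)⁻¹ = γ * (δ⁻¹ * x * δ) * γ⁻¹ := by group
        _ = γ * g * γ⁻¹ := by rw [hg2]
        _ = x := hγ
    have := mul_inv_eq_iff_eq_mul.mp key
    exact this.symm
  · have : ρ (γ * δ⁻¹) (ρ δ v) = ρ γ v := by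
      rw [← Module.End.mul_apply, ← map_mul]
      congr 1
      group
    rw [this]

theorem phiAt_eq (hcompat : ∀ g h : G, (grading h).map (ρ g) = grading (g * h * g⁻¹))
    (hT : ∀ x ∈ {g : G | grading g ≠ ⊥}, ∃! y : G, y ∈ T ∧ ∃ γ ∈ Γ, γ * x * γ⁻¹ = y)
    (hTX : T ⊆ {g : G | grading g ≠ ⊥})
    {g x : G} (hx : x ∈ T) {δ : G} (hδΓ : δ ∈ Γ) (hδ : δ * g * δ⁻¹ = x)
    (v : grading g) (hmem : ρ δ (v : V) ∈ grading x) :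
    phiAt Γ ρ grading hcompat hT g v =
      DirectSum.lof k T (QT Γ ρ grading T) ⟨x, hx⟩
        ((Submodule.comap (grading x).subtype (Sx Γ ρ grading x)).mkQ ⟨ρ δ v, hmem⟩) := by
  have hg : grading g ≠ ⊥ := by
    intro hbot
    apply hTX hx
    show grading x = ⊥
    rw [← hδ, ← hcompat, hbot, Submodule.map_bot]
  rw [phiAt, dif_neg hg]
  have hxy : x = (hT g hg).choose :=
    (hT g hg).choose_spec.2 x ⟨hx, δ, hδΓ, hδ⟩
  subst hxy
  simp only [LinearMap.comp_apply, LinearMap.codRestrict_apply]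
  refine congrArg _ ?_
  rw [Submodule.mkQ_apply, Submodule.mkQ_apply, Submodule.Quotient.eq,
    Submodule.mem_comap]
  simp only [Submodule.subtype_apply, AddSubgroupClass.coe_sub,
    LinearMap.codRestrict_apply, LinearMap.comp_apply]
  exact sub_mem_Sx Γ ρ grading hcompat
    (hT g hg).choose_spec.1.2.choose_spec.1 hδΓ
    (hT g hg).choose_spec.1.2.choose_spec.2 hδ v.2

noncomputable def Phi (hinternal : DirectSum.IsInternal grading)
    (hcompat : ∀ g h : G, (grading h).map (ρ g) = grading (g * h * g⁻¹))
    (hT : ∀ x ∈ {g : G | grading g ≠ ⊥}, ∃! y : G, y ∈ T ∧ ∃ γ ∈ Γ, γ * x * γ⁻¹ = y) :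
    V →ₗ[k] ⨁ x : T, QT Γ ρ grading T x :=
  (DirectSum.toModule k G _ (phiAt Γ ρ grading hcompat hT)).comp
    (LinearEquiv.ofBijective (DirectSum.coeLinearMap grading) hinternal).symm.toLinearMap

theorem Phi_apply (hinternal : DirectSum.IsInternal grading)
    (hcompat : ∀ g h : G, (grading h).map (ρ g) = grading (g * h * g⁻¹))
    (hT : ∀ x ∈ {g : G | grading g ≠ ⊥}, ∃! y : G, y ∈ T ∧ ∃ γ ∈ Γ, γ * x * γ⁻¹ = y)
    {g : G} (v : V) (hv : v ∈ grading g) :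
    Phi Γ ρ grading hinternal hcompat hT v = phiAt Γ ρ grading hcompat hT g ⟨v, hv⟩ := by
  have h1 : (LinearEquiv.ofBijective (DirectSum.coeLinearMap grading) hinternal).symm v
      = DirectSum.lof k G (fun i => grading i) g ⟨v, hv⟩ := by
    apply (LinearEquiv.ofBijective (DirectSum.coeLinearMap grading) hinternal).injective
    rw [LinearEquiv.apply_symm_apply]
    show v = DirectSum.coeLinearMap grading (DirectSum.lof k G (fun i => grading i) g ⟨v, hv⟩)
    rw [DirectSum.lof_eq_of,
      DirectSum.coeLinearMap_of]
  rw [Phi, LinearMap.comp_apply, LinearEquiv.coe_coe, h1, DirectSum.toModule_lof]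

theorem Phi_eq (hinternal : DirectSum.IsInternal grading)
    (hcompat : ∀ g h : G, (grading h).map (ρ g) = grading (g * h * g⁻¹))
    (hT : ∀ x ∈ {g : G | grading g ≠ ⊥}, ∃! y : G, y ∈ T ∧ ∃ γ ∈ Γ, γ * x * γ⁻¹ = y)
    (hTX : T ⊆ {g : G | grading g ≠ ⊥})
    {g x : G} (hx : x ∈ T) {δ : G} (hδΓ : δ ∈ Γ) (hδ : δ * g * δ⁻¹ = x)
    {v : V} (hv : v ∈ grading g) (hmem : ρ δ v ∈ grading x) :
    Phi Γ ρ grading hinternal hcompat hT v =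
      DirectSum.lof k T (QT Γ ρ grading T) ⟨x, hx⟩
        ((Submodule.comap (grading x).subtype (Sx Γ ρ grading x)).mkQ ⟨ρ δ v, hmem⟩) := by
  rw [Phi_apply Γ ρ grading hinternal hcompat hT v hv,
    phiAt_eq Γ ρ grading hcompat hT hTX hx hδΓ hδ ⟨v, hv⟩ hmem]

end S10

/-- Let `k` be a field, `G` a finite group, `Γ` a normal subgroup and `V`
a Yetter–Drinfeld module over `kG` with support `X`. Let `T ⊆ X` contain exactly one element
of each orbit of the conjugation action of `Γ` on `X`. Then the coinvariant space
`V / span{(γ - 1)·v}` is `k`-linearly isomorphic to `⊕_{x ∈ T} H₀(C_Γ(x), V_x)`.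
Moreover, if the kernel of `k[G] → k[G/Γ]` is a nilpotent ideal, then
`H₀(C_Γ(x), V_x) ≠ 0` for every `x ∈ X`. -/
theorem coinvariants_iso_and_nontrivial
    {k : Type*} [Field k] {G : Type*} [Group G] [Finite G] [DecidableEq G]
    (Γ : Subgroup G) [Γ.Normal]
    {V : Type*} [AddCommGroup V] [Module k V]
    (ρ : Representation k G V) (grading : G → Submodule k V)
    (hinternal : DirectSum.IsInternal grading)
    (hcompat : ∀ g h : G, (grading h).map (ρ g) = grading (g * h * g⁻¹))
    (T : Set G)
    (hT : ∀ x ∈ {g : G | grading g ≠ ⊥},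
      ∃! y : G, y ∈ T ∧ ∃ γ ∈ Γ, γ * x * γ⁻¹ = y)
    (hTX : T ⊆ {g : G | grading g ≠ ⊥}) :
    Nonempty ((V ⧸ Submodule.span k {w : V | ∃ γ ∈ Γ, ∃ v : V, w = ρ γ v - v}) ≃ₗ[k]
      (⨁ x : T, (grading (x : G) ⧸ Submodule.comap (grading (x : G)).subtype
        (Submodule.span k {w : V | ∃ γ ∈ Subgroup.centralizer {(x : G)} ⊓ Γ,
          ∃ v ∈ grading (x : G), w = ρ γ v - v})))) ∧
    ((∃ n : ℕ, 0 < n ∧ ∀ f : Fin n → MonoidAlgebra k G,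
        (∀ i : Fin n,
          f i ∈ RingHom.ker (MonoidAlgebra.mapDomainRingHom k (QuotientGroup.mk' Γ))) →
        (List.ofFn f).prod = 0) →
      ∀ x : G, grading x ≠ ⊥ →
        Nontrivial (grading x ⧸ Submodule.comap (grading x).subtype
          (Submodule.span k {w : V | ∃ γ ∈ Subgroup.centralizer {x} ⊓ Γ,
            ∃ v ∈ grading x, w = ρ γ v - v}))) := by
  have htop : ∀ (K : Submodule k V), (∀ g : G, grading g ≤ K) → ∀ v : V, v ∈ K := by
    intro K hK v
    exact (le_trans (le_of_eq hinternal.submodule_iSup_eq_top.symm) (iSup_le hK)) trivial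
  constructor
  · -- the isomorphism
    have hker : S10.W Γ ρ ≤ LinearMap.ker (S10.Phi Γ ρ grading hinternal hcompat hT) := by
      rw [S10.W, Submodule.span_le]
      rintro w ⟨γ, hγ, v, rfl⟩
      have hK : ∀ g : G, grading g ≤ LinearMap.ker
          ((S10.Phi Γ ρ grading hinternal hcompat hT ∘ₗ (ρ γ : V →ₗ[k] V)) -
            S10.Phi Γ ρ grading hinternal hcompat hT) := by
        intro g u hu
        rw [LinearMap.mem_ker, LinearMap.sub_apply, LinearMap.comp_apply, sub_eq_zero]
        by_cases hg : grading g = ⊥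
        · rw [hg] at hu
          obtain rfl : u = 0 := hu
          simp
        · have hg' : grading (γ * g * γ⁻¹) ≠ ⊥ := by
            intro hbot
            apply hg
            have h1 := hcompat γ⁻¹ (γ * g * γ⁻¹)
            have h2 : γ⁻¹ * (γ * g * γ⁻¹) * γ⁻¹⁻¹ = g := by group
            rw [h2, hbot, Submodule.map_bot] at h1
            exact h1.symm
          obtain ⟨x, hxT, δ, hδΓ, hδ⟩ := (hT (γ * g * γ⁻¹) hg').exists
          have hm1 : ρ γ u ∈ grading (γ * g * γ⁻¹) := S10.mem_conj ρ grading hcompat hu γ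
          have hm2 : ρ δ (ρ γ u) ∈ grading x := S10.mem_of_conj ρ grading hcompat hm1 hδ
          have hδγ : (δ * γ) * g * (δ * γ)⁻¹ = x := by
            rw [← hδ]; group
          have hm2' : ρ (δ * γ) u ∈ grading x := S10.mem_of_conj ρ grading hcompat hu hδγ
          rw [S10.Phi_eq Γ ρ grading hinternal hcompat hT hTX hxT hδΓ hδ hm1 hm2,
            S10.Phi_eq Γ ρ grading hinternal hcompat hT hTX hxT (mul_mem hδΓ hγ) hδγ hu hm2']
          refine congrArg _ (congrArg _ (Subtype.ext ?_))
          show ρ δ (ρ γ u) = ρ (δ * γ) u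
          rw [map_mul, Module.End.mul_apply]
      have := htop _ hK v
      rw [LinearMap.mem_ker, LinearMap.sub_apply, LinearMap.comp_apply, sub_eq_zero] at this
      rw [SetLike.mem_coe, LinearMap.mem_ker, map_sub, this, sub_self]
    have hSxW : ∀ x : G, S10.Sx Γ ρ grading x ≤ S10.W Γ ρ := by
      intro x
      rw [S10.Sx, Submodule.span_le]
      rintro w ⟨γ, hγ, v, hv, rfl⟩
      exact Submodule.subset_span ⟨γ, (Subgroup.mem_inf.mp hγ).2, v, rfl⟩
    let Phi' : (V ⧸ S10.W Γ ρ) →ₗ[k] ⨁ x : T, S10.QT Γ ρ grading T x :=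
      Submodule.liftQ _ (S10.Phi Γ ρ grading hinternal hcompat hT) hker
    let psiAt : ∀ x : T, S10.QT Γ ρ grading T x →ₗ[k] V ⧸ S10.W Γ ρ := fun x =>
      Submodule.liftQ _ ((S10.W Γ ρ).mkQ.comp (grading (x : G)).subtype) (by
        intro u hu
        rw [LinearMap.mem_ker, LinearMap.comp_apply, Submodule.subtype_apply,
          Submodule.mkQ_apply, Submodule.Quotient.mk_eq_zero]
        exact hSxW x (Submodule.mem_comap.mp hu))
    let Psi : (⨁ x : T, S10.QT Γ ρ grading T x) →ₗ[k] V ⧸ S10.W Γ ρ :=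
      DirectSum.toModule k T _ psiAt
    refine ⟨LinearEquiv.ofLinear Phi' Psi ?_ ?_⟩
    · -- Phi' ∘ Psi = id
      refine DirectSum.linearMap_ext _ fun x => ?_
      refine LinearMap.ext fun q => ?_
      obtain ⟨v, rfl⟩ := Submodule.Quotient.mk_surjective _ q
      simp only [LinearMap.comp_apply, Submodule.mkQ_apply, LinearMap.id_apply]
      show Phi' (Psi (DirectSum.lof k T (S10.QT Γ ρ grading T) x (Submodule.Quotient.mk v))) =
        DirectSum.lof k T (S10.QT Γ ρ grading T) x (Submodule.Quotient.mk v)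
      have e1 : Psi (DirectSum.lof k T (S10.QT Γ ρ grading T) x
          (Submodule.Quotient.mk v)) = Submodule.Quotient.mk (v : V) := by
        rw [show Psi (DirectSum.lof k T (S10.QT Γ ρ grading T) x (Submodule.Quotient.mk v))
            = psiAt x (Submodule.Quotient.mk v) from DirectSum.toModule_lof k x _]
        rfl
      rw [e1]
      have hone : (1 : G) * (x : G) * (1 : G)⁻¹ = (x : G) := by group
      have hmem : ρ (1 : G) (v : V) ∈ grading (x : G) := by
        rw [map_one]; exact v.2
      have e2 : Phi' (Submodule.Quotient.mk (v : V)) =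
          S10.Phi Γ ρ grading hinternal hcompat hT (v : V) := rfl
      rw [e2, S10.Phi_eq Γ ρ grading hinternal hcompat hT hTX x.2 (one_mem Γ) hone v.2 hmem]
      have : (⟨ρ (1 : G) (v : V), hmem⟩ : grading (x : G)) = v := by
        apply Subtype.ext
        show ρ (1 : G) (v : V) = v
        rw [map_one]; rfl
      simp only [Submodule.mkQ_apply, this]
    · -- Psi ∘ Phi' = id
      refine Submodule.linearMap_qext _ ?_
      ext v
      simp only [LinearMap.comp_apply, Submodule.mkQ_apply, LinearMap.id_apply]
      have hK : ∀ g : G, grading g ≤ LinearMap.ker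
          ((Psi ∘ₗ S10.Phi Γ ρ grading hinternal hcompat hT) - (S10.W Γ ρ).mkQ) := by
        intro g u hu
        rw [LinearMap.mem_ker, LinearMap.sub_apply, LinearMap.comp_apply, sub_eq_zero]
        by_cases hg : grading g = ⊥
        · rw [hg] at hu
          obtain rfl : u = 0 := hu
          simp
        · obtain ⟨x, hxT, δ, hδΓ, hδ⟩ := (hT g hg).exists
          have hm : ρ δ u ∈ grading x := S10.mem_of_conj ρ grading hcompat hu hδ
          rw [S10.Phi_eq Γ ρ grading hinternal hcompat hT hTX hxT hδΓ hδ hu hm]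
          have e3 : Psi (DirectSum.lof k T (S10.QT Γ ρ grading T) ⟨x, hxT⟩
              ((Submodule.comap (grading x).subtype (S10.Sx Γ ρ grading x)).mkQ ⟨ρ δ u, hm⟩))
              = (S10.W Γ ρ).mkQ (ρ δ u) := by
            rw [show Psi (DirectSum.lof k T (S10.QT Γ ρ grading T) ⟨x, hxT⟩
                ((Submodule.comap (grading x).subtype (S10.Sx Γ ρ grading x)).mkQ ⟨ρ δ u, hm⟩))
                = psiAt ⟨x, hxT⟩ ((Submodule.comap (grading x).subtype
                  (S10.Sx Γ ρ grading x)).mkQ ⟨ρ δ u, hm⟩) from DirectSum.toModule_lof k _ _]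
            rfl
          rw [e3, Submodule.mkQ_apply, Submodule.mkQ_apply, Submodule.Quotient.eq]
          exact Submodule.subset_span ⟨δ, hδΓ, u, rfl⟩
      have := htop _ hK v
      rw [LinearMap.mem_ker, LinearMap.sub_apply, LinearMap.comp_apply, sub_eq_zero] at this
      exact this
  · -- nontriviality
    rintro ⟨n, -, hprod⟩ x hx
    rw [← not_subsingleton_iff_nontrivial]
    intro hsub
    have htop2 : Submodule.comap (grading x).subtype (S10.Sx Γ ρ grading x) = ⊤ :=
      by rwa [Submodule.Quotient.subsingleton_iff] at hsub
    have hle : grading x ≤ S10.Sx Γ ρ grading x := Submodule.comap_subtype_eq_top.mp htop2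
    set P : ℕ → Submodule k V := fun m => Submodule.span k
      {w : V | ∃ γs : Fin m → G, (∀ i, γs i ∈ Subgroup.centralizer {x} ⊓ Γ) ∧
        ∃ v ∈ grading x,
          w = ((List.ofFn fun i => ((ρ (γs i) : Module.End k V) - 1)).prod : Module.End k V) v}
      with hP
    have claim1 : ∀ m : ℕ, ∀ γ ∈ Subgroup.centralizer {x} ⊓ Γ, ∀ w ∈ P m,
        ρ γ w - w ∈ P (m + 1) := by
      intro m γ hγ w hw
      have hsub1 : P m ≤ Submodule.comap ((ρ γ : Module.End k V) - 1) (P (m + 1)) := by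
        simp only [hP]
        rw [Submodule.span_le]
        rintro w' ⟨γs, hγs, v, hv, rfl⟩
        simp only [SetLike.mem_coe, Submodule.mem_comap]
        apply Submodule.subset_span
        refine ⟨Fin.cons γ γs, ?_, v, hv, ?_⟩
        · intro i
          refine Fin.cases hγ (fun j => ?_) i
          rw [Fin.cons_succ]
          exact hγs j
        · rw [List.ofFn_succ]
          simp only [Fin.cons_zero, Fin.cons_succ, List.prod_cons, Module.End.mul_apply]
      have h2 := hsub1 hw
      rw [Submodule.mem_comap] at h2
      simpa only [LinearMap.sub_apply, Module.End.one_apply] using h2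
    have claim2 : ∀ m : ℕ, grading x ≤ P m := by
      intro m
      induction m with
      | zero =>
        intro v hv
        simp only [hP]
        apply Submodule.subset_span
        exact ⟨Fin.elim0, fun i => i.elim0, v, hv, by simp⟩
      | succ m ih =>
        refine le_trans hle ?_
        rw [S10.Sx, Submodule.span_le]
        rintro w ⟨γ, hγ, v, hv, rfl⟩
        exact SetLike.mem_coe.mpr (claim1 m γ hγ v (ih hv))
    have claim3 : P n ≤ ⊥ := by
      simp only [hP]
      rw [Submodule.span_le]
      rintro w ⟨γs, hγs, v, hv, rfl⟩
      simp only [SetLike.mem_coe, Submodule.mem_bot]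
      set a : Fin n → MonoidAlgebra k G := fun i =>
        MonoidAlgebra.single (γs i) (1 : k) - 1 with ha'
      have ha : ∀ i, a i ∈ RingHom.ker
          (MonoidAlgebra.mapDomainRingHom k (QuotientGroup.mk' Γ)) := by
        intro i
        rw [RingHom.mem_ker, ha']
        simp only [map_sub, map_one]
        have h1 : (MonoidAlgebra.mapDomainRingHom k (QuotientGroup.mk' Γ))
            (MonoidAlgebra.single (γs i) (1 : k)) =
            MonoidAlgebra.single ((QuotientGroup.mk' Γ) (γs i)) (1 : k) := by
          simp [MonoidAlgebra.mapDomainRingHom, Finsupp.mapDomain_single]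
        have h2 : (QuotientGroup.mk' Γ) (γs i) = 1 :=
          (QuotientGroup.eq_one_iff _).mpr (Subgroup.mem_inf.mp (hγs i)).2
        rw [h1, h2, ← MonoidAlgebra.one_def, sub_self]
      have hprod0 : (List.ofFn a).prod = 0 := hprod a ha
      have hπ : (List.ofFn fun i => ((ρ (γs i) : Module.End k V) - 1)) =
          (List.ofFn a).map ρ.asAlgebraHom := by
        rw [List.map_ofFn]
        congr 1
        funext i
        show (ρ (γs i) : Module.End k V) - 1 = ρ.asAlgebraHom (a i)
        rw [ha']
        simp only [map_sub, map_one, Representation.asAlgebraHom_single_one]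
      rw [hπ, ← map_list_prod, hprod0, map_zero, LinearMap.zero_apply]
    exact hx (le_bot_iff.mp (le_trans (claim2 n) claim3))
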